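/- arXiv:1709.10364 — 5 statements merged into one kernel-verified Lean document; each statement's English description precedes it below -/
import Mathlib

section
/- The function j(s3,s4,s5,s6,s7) = m1(s3 + s7 + s3·s4) + (m1+m2)(s4·s7 − s5·s6) is a first integral of the reduced system: its derivative along the vector field defining equations (ṡ3, ṡ4, ṡ5, ṡ6, ṡ7) given in the reduced system vanishes identically. -/
/-- j = m1(s3+s7+s3s4) + (m1+m2)(s4s7−s5s6) is a first integral of the reduced
system: along any solution curve its time derivative vanishes. -/
theorem stmt_9 (m1 m2 : ℝ) (hm1 : 0 < m1) (hm2 : 0 < m2) (U' : ℝ → ℝ)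
    (s3 s4 s5 s6 s7 : ℝ → ℝ) (t : ℝ)
    (h3 : HasDerivAt s3
      (-2*(U' ((1+s4 t)^2+(s5 t)^2) - U' ((s4 t)^2+(s5 t)^2)) * s5 t) t)
    (h4 : HasDerivAt s4 (s3 t * s5 t + s6 t) t)
    (h5 : HasDerivAt s5 (-(s3 t * s4 t) + s7 t) t)
    (h6 : HasDerivAt s6
      (-(2*m1/(m1+m2)) * U' ((1+s4 t)^2+(s5 t)^2) * (1+s4 t)
       - (2*m2/(m1+m2)) * U' ((s4 t)^2+(s5 t)^2) * s4 t
       + (m1/(m1+m2)) * (s3 t)^2 + s3 t * s7 t) t)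
    (h7 : HasDerivAt s7 (-2 * U' ((s4 t)^2+(s5 t)^2) * s5 t - s3 t * s6 t) t) :
    HasDerivAt (fun τ => m1 * (s3 τ + s7 τ + s3 τ * s4 τ)
      + (m1+m2) * (s4 τ * s7 τ - s5 τ * s6 τ)) 0 t := by
  have hm : m1 + m2 ≠ 0 := by positivity
  have h := (((h3.add h7).add (h3.mul h4)).const_mul m1).add
    (((h4.mul h7).sub (h5.mul h6)).const_mul (m1+m2))
  refine h.congr_deriv ?_
  field_simp
  ring
end

section
/- The Hamiltonian h(s3,s4,s5,s6,s7) = (m1/2)(s3² + 2s3s7 + s6² + s7²) + (m2/2)(s6² + s7²) + m1·U((1+s4)² + s5²) + m2·U(s4² + s5²) is a first integral of the reduced system, i.e., its Lie derivative along the reduced vector field vanishes. -/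
/-- The reduced Hamiltonian h is a first integral of the reduced system:
its derivative along any solution curve vanishes. -/
theorem stmt_10 (m1 m2 : ℝ) (hm1 : 0 < m1) (hm2 : 0 < m2) (U U' : ℝ → ℝ)
    (hU : ∀ r : ℝ, HasDerivAt U (U' r) r)
    (s3 s4 s5 s6 s7 : ℝ → ℝ) (t : ℝ)
    (h3 : HasDerivAt s3
      (-2*(U' ((1+s4 t)^2+(s5 t)^2) - U' ((s4 t)^2+(s5 t)^2)) * s5 t) t)
    (h4 : HasDerivAt s4 (s3 t * s5 t + s6 t) t)
    (h5 : HasDerivAt s5 (-(s3 t * s4 t) + s7 t) t)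
    (h6 : HasDerivAt s6
      (-(2*m1/(m1+m2)) * U' ((1+s4 t)^2+(s5 t)^2) * (1+s4 t)
       - (2*m2/(m1+m2)) * U' ((s4 t)^2+(s5 t)^2) * s4 t
       + (m1/(m1+m2)) * (s3 t)^2 + s3 t * s7 t) t)
    (h7 : HasDerivAt s7 (-2 * U' ((s4 t)^2+(s5 t)^2) * s5 t - s3 t * s6 t) t) :
    HasDerivAt (fun τ =>
      m1/2 * ((s3 τ)^2 + 2 * s3 τ * s7 τ + (s6 τ)^2 + (s7 τ)^2)
      + m2/2 * ((s6 τ)^2 + (s7 τ)^2)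
      + m1 * U ((1+s4 τ)^2 + (s5 τ)^2) + m2 * U ((s4 τ)^2 + (s5 τ)^2)) 0 t := by
  have hm : m1 + m2 ≠ 0 := by positivity
  set d3 := -2*(U' ((1+s4 t)^2+(s5 t)^2) - U' ((s4 t)^2+(s5 t)^2)) * s5 t with hd3
  set d4 := s3 t * s5 t + s6 t with hd4
  set d5 := -(s3 t * s4 t) + s7 t with hd5
  set d6 := -(2*m1/(m1+m2)) * U' ((1+s4 t)^2+(s5 t)^2) * (1+s4 t)
       - (2*m2/(m1+m2)) * U' ((s4 t)^2+(s5 t)^2) * s4 t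
       + (m1/(m1+m2)) * (s3 t)^2 + s3 t * s7 t with hd6
  set d7 := -2 * U' ((s4 t)^2+(s5 t)^2) * s5 t - s3 t * s6 t with hd7
  have hA : HasDerivAt (fun τ => (1+s4 τ)^2 + (s5 τ)^2)
      (2*(1+s4 t)^1*d4 + 2*(s5 t)^1*d5) t :=
    ((h4.const_add 1).pow 2).add (h5.pow 2)
  have hB : HasDerivAt (fun τ => (s4 τ)^2 + (s5 τ)^2)
      (2*(s4 t)^1*d4 + 2*(s5 t)^1*d5) t :=
    (h4.pow 2).add (h5.pow 2)
  have hUA := (hU ((1+s4 t)^2+(s5 t)^2)).comp t hA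
  have hUB := (hU ((s4 t)^2+(s5 t)^2)).comp t hB
  have H := ((((((h3.pow 2).add ((h3.mul h7).const_mul 2)).add (h6.pow 2)).add
      (h7.pow 2)).const_mul (m1/2)).add
      ((((h6.pow 2).add (h7.pow 2)).const_mul (m2/2)))).add
      ((hUA.const_mul m1).add (hUB.const_mul m2))
  convert H using 1
  · rfl
  · rfl
  · funext τ
    simp only [Function.comp, Pi.add_apply, Pi.mul_apply, Pi.pow_apply]
    ring
  · simp only [hd3, hd4, hd5, hd6, hd7]
    field_simp
    ring
end

section
/- A point (s3,s4,s5,s6,s7) ∈ ℝ⁵ with s5 = 0 and m1 + (m1+m2)s4 ≠ 0 is an equilibrium of the reduced system if and only if s6 = 0, s7 = s3·s4, and s3²·(m1 + (m1+m2)s4) = 2m1·U'((1+s4)²)·(1+s4) + 2m2·U'(s4²)·s4. -/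
/-- Equilibria of the reduced system with s5 = 0 and m1+(m1+m2)s4 ≠ 0 are
characterized by s6 = 0, s7 = s3·s4, and
s3²·(m1+(m1+m2)s4) = 2m1·U'((1+s4)²)·(1+s4) + 2m2·U'(s4²)·s4. -/
theorem stmt_11 (m1 m2 : ℝ) (hm1 : 0 < m1) (hm2 : 0 < m2) (U' : ℝ → ℝ)
    (s3 s4 s5 s6 s7 : ℝ) (h5 : s5 = 0) (hden : m1 + (m1+m2) * s4 ≠ 0) :
    ((-2*(U' ((1+s4)^2+s5^2) - U' (s4^2+s5^2)) * s5 = 0) ∧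
     (s3 * s5 + s6 = 0) ∧
     (-(s3 * s4) + s7 = 0) ∧
     (-(2*m1/(m1+m2)) * U' ((1+s4)^2+s5^2) * (1+s4)
       - (2*m2/(m1+m2)) * U' (s4^2+s5^2) * s4
       + (m1/(m1+m2)) * s3^2 + s3 * s7 = 0) ∧
     (-2 * U' (s4^2+s5^2) * s5 - s3 * s6 = 0)) ↔
    (s6 = 0 ∧ s7 = s3 * s4 ∧
     s3^2 * (m1 + (m1+m2) * s4)
       = 2 * m1 * U' ((1+s4)^2) * (1+s4) + 2 * m2 * U' (s4^2) * s4) := by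
  have hm : m1 + m2 ≠ 0 := by positivity
  subst h5
  simp only [mul_zero, zero_mul, add_zero, zero_add, mul_comm]
  constructor
  · rintro ⟨-, h2, h3, h4, -⟩
    have h6 : s6 = 0 := by linarith
    have h7 : s7 = s3 * s4 := by linarith
    refine ⟨h6, h7, ?_⟩
    have := h4
    field_simp at this
    simp only [show (0:ℝ)^2 = 0 by norm_num, add_zero] at this
    have hM2 : ((m1+m2)^2 : ℝ) ≠ 0 := pow_ne_zero _ hm
    apply mul_left_cancel₀ hM2
    linear_combination (m1+m2)^2 * this - (m1+m2)^3*s3 * h7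
  · rintro ⟨h6, h7, heq⟩
    refine ⟨trivial, by simp [h6], by linarith, ?_, by simp [h6]⟩
    simp only [show (0:ℝ)^2 = 0 by norm_num, add_zero]
    field_simp
    linear_combination heq + (m1+m2)*s3 * h7
end

section
/- If m1 ≠ m2 and U' is strictly monotone (strictly increasing or strictly decreasing), then the reduced system has no equilibrium with s5 = 0 and s4 = −m1/(m1+m2). -/
/-- If m1 ≠ m2 and U' is strictly monotone, the reduced system has no
equilibrium with s5 = 0 and s4 = −m1/(m1+m2). -/
theorem stmt_12 (m1 m2 : ℝ) (hm1 : 0 < m1) (hm2 : 0 < m2) (hmm : m1 ≠ m2)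
    (U' : ℝ → ℝ) (hmono : StrictMono U' ∨ StrictAnti U')
    (s3 s4 s5 s6 s7 : ℝ) (h5 : s5 = 0) (h4 : s4 = -m1 / (m1+m2)) :
    ¬ ((-2*(U' ((1+s4)^2+s5^2) - U' (s4^2+s5^2)) * s5 = 0) ∧
       (s3 * s5 + s6 = 0) ∧
       (-(s3 * s4) + s7 = 0) ∧
       (-(2*m1/(m1+m2)) * U' ((1+s4)^2+s5^2) * (1+s4)
         - (2*m2/(m1+m2)) * U' (s4^2+s5^2) * s4
         + (m1/(m1+m2)) * s3^2 + s3 * s7 = 0) ∧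
       (-2 * U' (s4^2+s5^2) * s5 - s3 * s6 = 0)) := by
  rintro ⟨-, -, h3, h4eq, -⟩
  have hM : (0:ℝ) < m1 + m2 := by linarith
  have hMne : m1 + m2 ≠ 0 := ne_of_gt hM
  subst h5 h4
  have hs7 : s7 = s3 * (-m1/(m1+m2)) := by linarith
  rw [hs7] at h4eq
  set a := U' ((1 + -m1/(m1+m2))^2 + 0^2) with hA
  set b := U' ((-m1/(m1+m2))^2 + 0^2) with hB
  have hab : a = b := by
    field_simp at h4eq
    have key : 2*m1*m2*(m1+m2)^4*(b-a) = 0 := by linear_combination (m1+m2)^4 * h4eq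
    have hpos : (2*m1*m2*(m1+m2)^4) ≠ 0 := by positivity
    have := (mul_eq_zero.mp key).resolve_left hpos
    linarith
  have hinj : Function.Injective U' :=
    hmono.elim StrictMono.injective StrictAnti.injective
  have hAB : (1 + -m1/(m1+m2))^2 + 0^2 = (-m1/(m1+m2))^2 + 0^2 := hinj hab
  apply hmm
  have h1 : (1 + -m1/(m1+m2)) = m2/(m1+m2) := by field_simp; ring
  rw [h1] at hAB
  have : m2^2 = m1^2 := by
    field_simp at hAB
    nlinarith [hAB]
  nlinarith [this]
end

section
/- Suppose U' is strictly monotone. Then a point (s3,s4,s5,s6,s7) with s5 ≠ 0 is an equilibrium of the reduced system if and only if s4 = −1/2, s6 = −s3·s5, s7 = −s3/2, and s3² = 2·U'(1/4 + s5²). -/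
/-- For strictly monotone U', a point with s5 ≠ 0 is an equilibrium of the
reduced system iff s4 = −1/2, s6 = −s3·s5, s7 = −s3/2 and s3² = 2U'(1/4+s5²). -/
theorem stmt_13 (m1 m2 : ℝ) (hm1 : 0 < m1) (hm2 : 0 < m2)
    (U' : ℝ → ℝ) (hmono : StrictMono U' ∨ StrictAnti U')
    (s3 s4 s5 s6 s7 : ℝ) (h5 : s5 ≠ 0) :
    ((-2*(U' ((1+s4)^2+s5^2) - U' (s4^2+s5^2)) * s5 = 0) ∧
     (s3 * s5 + s6 = 0) ∧
     (-(s3 * s4) + s7 = 0) ∧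
     (-(2*m1/(m1+m2)) * U' ((1+s4)^2+s5^2) * (1+s4)
       - (2*m2/(m1+m2)) * U' (s4^2+s5^2) * s4
       + (m1/(m1+m2)) * s3^2 + s3 * s7 = 0) ∧
     (-2 * U' (s4^2+s5^2) * s5 - s3 * s6 = 0)) ↔
    (s4 = -(1/2) ∧ s6 = -(s3 * s5) ∧ s7 = -(s3/2) ∧
     s3^2 = 2 * U' (1/4 + s5^2)) := by
  have hm : m1 + m2 ≠ 0 := by positivity
  have hinj : Function.Injective U' :=
    hmono.elim StrictMono.injective StrictAnti.injective
  constructor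
  · rintro ⟨h1, h2, h3, h4, h5'⟩
    have hval : U' ((1+s4)^2+s5^2) = U' (s4^2+s5^2) := by
      rcases mul_eq_zero.mp h1 with h | h
      · linarith
      · exact absurd h h5
    have harg := hinj hval
    have hs4 : s4 = -(1/2) := by nlinarith [sq_nonneg (1 + 2*s4)]
    subst hs4
    have harg2 : ((-(1/2):ℝ))^2 + s5^2 = 1/4 + s5^2 := by ring
    rw [harg2] at h5'
    have hs6 : s6 = -(s3 * s5) := by linarith
    have hs7 : s7 = -(s3/2) := by linarith
    refine ⟨rfl, hs6, hs7, ?_⟩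
    have h5'' : (s3^2 - 2 * U' (1/4 + s5^2)) * s5 = 0 := by
      rw [hs6] at h5'; linarith [h5']
    rcases mul_eq_zero.mp h5'' with h | h
    · linarith
    · exact absurd h h5
  · rintro ⟨hs4, hs6, hs7, hs3⟩
    subst hs4 hs6 hs7
    have e1 : (1 + -(1/2):ℝ)^2 + s5^2 = 1/4 + s5^2 := by ring
    have e2 : ((-(1/2):ℝ))^2 + s5^2 = 1/4 + s5^2 := by ring
    rw [e1, e2]
    refine ⟨by ring, by ring, by ring, ?_, by linear_combination s5 * hs3⟩
    have key : m1/(m1+m2) + m2/(m1+m2) = 1 := by field_simp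
    linear_combination (m1/(m1+m2) - 1/2) * hs3 + U' (1/4+s5^2) * key
end
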